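/- arXiv:0803.2544 — 3 statements merged into one kernel-verified Lean document; each statement's English description precedes it below -/
import Mathlib

section
/- Let R be a ring and M an R-module admitting a projective resolution P_* → M such that P_j is finitely generated for all j ≥ n (some n). Then M admits a free resolution F_* → M such that F_j is finitely generated for all j ≥ n+1. -/
universe u

open CategoryTheory

namespace FreeResAux

variable {R : Type u} [Ring R]

/-- `PUnit ⊕ ℕ ≃ ℕ`. -/
def punitSumNatEquiv : (PUnit.{1} ⊕ ℕ) ≃ ℕ where
  toFun := Sum.elim (fun _ => 0) Nat.succ
  invFun n := match n with
    | 0 => Sum.inl ⟨⟩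
    | (k+1) => Sum.inr k
  left_inv := by rintro (⟨⟩|k) <;> rfl
  right_inv := by rintro (_|n) <;> rfl

set_option maxHeartbeats 1000000 in
theorem exists_split_equiv {N X : Type u} [AddCommGroup N] [AddCommGroup X] [Module R N]
    [Module R X] [Module.Projective R X] (g : N →ₗ[R] X) (hg : Function.Surjective g) :
    Nonempty (N ≃ₗ[R] (LinearMap.ker g) × X) := by
  obtain ⟨l, hl⟩ := Module.projective_lifting_property g LinearMap.id hg
  have hex : Function.Exact ((LinearMap.ker g).subtype) g := LinearMap.exact_iff.mpr (Submodule.range_subtype _).symm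
  have hinj : Function.Injective ((LinearMap.ker g).subtype) := Submodule.injective_subtype _
  exact ⟨(hex.splitSurjectiveEquiv hinj ⟨l, hl⟩).1⟩

/-- distribution of finsupp over a binary product -/
noncomputable def finsuppProdDistrib (α : Type) (K X : Type u) [AddCommGroup K] [AddCommGroup X]
    [Module R K] [Module R X] :
    (α →₀ (K × X)) ≃ₗ[R] (α →₀ K) × (α →₀ X) where
  toFun f := (f.mapRange Prod.fst rfl, f.mapRange Prod.snd rfl)
  invFun p := Finsupp.zipWith Prod.mk rfl p.1 p.2
  left_inv f := by ext a <;> simp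
  right_inv p := by
    refine Prod.ext ?_ ?_ <;> ext a <;> simp
  map_add' f g := by
    refine Prod.ext ?_ ?_ <;> ext a <;> simp
  map_smul' c f := by
    refine Prod.ext ?_ ?_ <;> ext a <;> simp

/-- peel one factor off `ℕ →₀ A` -/
noncomputable def peel (A : Type u) [AddCommGroup A] [Module R A] :
    (ℕ →₀ A) ≃ₗ[R] A × (ℕ →₀ A) :=
  (Finsupp.domLCongr punitSumNatEquiv.symm).trans <|
    (Finsupp.sumFinsuppLEquivProdFinsupp R).trans <|
      LinearEquiv.prodCongr (Finsupp.LinearEquiv.finsuppUnique R A PUnit) (LinearEquiv.refl R _)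

theorem projective_prod (X Y : Type u) [AddCommGroup X] [AddCommGroup Y] [Module R X] [Module R Y]
    [Module.Projective R X] [Module.Projective R Y] : Module.Projective R (X × Y) := by
  obtain ⟨sX, hsX⟩ := ‹Module.Projective R X›
  obtain ⟨sY, hsY⟩ := ‹Module.Projective R Y›
  refine Module.Projective.of_split (M := (X →₀ R) × (Y →₀ R))
    (LinearMap.prodMap sX sY)
    (LinearMap.prodMap (Finsupp.linearCombination R id) (Finsupp.linearCombination R id)) ?_
  refine LinearMap.ext fun p => ?_
  obtain ⟨x, y⟩ := p
  show (Finsupp.linearCombination R id (sX x), Finsupp.linearCombination R id (sY y)) = (x, y)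
  rw [hsX x, hsY y]

/-- Eilenberg swindle -/
theorem exists_swindle (X : Type u) [AddCommGroup X] [Module R X] [Module.Projective R X] :
    ∃ (Y : Type u) (_ : AddCommGroup Y) (_ : Module R Y),
      Module.Projective R Y ∧ Module.Free R Y ∧ Module.Free R (X × Y) := by
  classical
  have hg : Function.Surjective (Finsupp.linearCombination R (id : X → X)) := fun x =>
    ⟨Finsupp.single x 1, by simp⟩
  obtain ⟨e0⟩ := exists_split_equiv (R := R) (Finsupp.linearCombination R (id : X → X)) hg
  set K := LinearMap.ker (Finsupp.linearCombination R (id : X → X)) with hK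
  refine ⟨ℕ →₀ (X →₀ R), inferInstance, inferInstance, inferInstance, inferInstance, ?_⟩
  have E : (X × (ℕ →₀ (X →₀ R))) ≃ₗ[R] (ℕ →₀ (X →₀ R)) :=
    (LinearEquiv.prodCongr (LinearEquiv.refl R X)
        ((Finsupp.mapRange.linearEquiv e0).trans (finsuppProdDistrib ℕ K X))).trans <|
      ((LinearEquiv.prodAssoc R X (ℕ →₀ K) (ℕ →₀ X)).symm.trans <|
        (LinearEquiv.prodCongr (LinearEquiv.prodComm R X (ℕ →₀ K)) (LinearEquiv.refl R _)).trans <|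
          (LinearEquiv.prodAssoc R (ℕ →₀ K) X (ℕ →₀ X)).trans <|
            (LinearEquiv.prodCongr (LinearEquiv.refl R _) (peel X).symm).trans <|
              ((finsuppProdDistrib ℕ K X).symm.trans
                (Finsupp.mapRange.linearEquiv e0.symm)))
  exact Module.Free.of_equiv E.symm

/-- complement for a finitely generated projective module -/
theorem exists_fg_compl (X : Type u) [AddCommGroup X] [Module R X] [Module.Projective R X]
    [Module.Finite R X] :
    ∃ (Y : Type u) (_ : AddCommGroup Y) (_ : Module R Y),
      Module.Projective R Y ∧ Module.Finite R Y ∧ Module.Free R (X × Y) ∧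
        Module.Finite R (X × Y) := by
  obtain ⟨k, g, hg⟩ := Module.Finite.exists_fin' R X
  obtain ⟨e⟩ := exists_split_equiv (R := R) g hg
  have hfree : Module.Free R (X × LinearMap.ker g) :=
    Module.Free.of_equiv (e.trans (LinearEquiv.prodComm R _ _))
  have hfin : Module.Finite R (X × LinearMap.ker g) :=
    Module.Finite.equiv (e.trans (LinearEquiv.prodComm R _ _))
  refine ⟨LinearMap.ker g, inferInstance, inferInstance, ?_, ?_, hfree, hfin⟩
  · refine Module.Projective.of_split (M := Fin k → R)
      (e.symm.toLinearMap.comp (LinearMap.inl R _ X))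
      ((LinearMap.fst R _ X).comp e.toLinearMap) ?_
    ext x
    simp
  · exact Module.Finite.of_surjective ((LinearMap.fst R _ X).comp e.toLinearMap)
      (Prod.fst_surjective.comp e.surjective)

end FreeResAux
namespace FreeResAux

variable (R : Type u) [Ring R]

/-- invariant for the added complement modules -/
def Good (n j : ℕ) (Q : ModuleCat.{u} R) : Prop :=
  Module.Projective R Q ∧ (j ≤ n → Module.Free R Q) ∧ (n + 1 ≤ j → Module.Finite R Q)

theorem exists_next (n j : ℕ) (X Q : ModuleCat.{u} R)
    (hXp : Module.Projective R X) (hX : n ≤ j → Module.Finite R X) (hQ : Good R n j Q) :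
    ∃ Q' : ModuleCat.{u} R, Good R n (j + 1) Q' ∧ Module.Free R (X × Q × Q') ∧
      (n + 1 ≤ j → Module.Finite R (X × Q × Q')) := by
  obtain ⟨hQp, hQfree, hQfin⟩ := hQ
  haveI := hQp
  haveI := hXp
  by_cases hj : n ≤ j
  · haveI := hX hj
    by_cases hj' : j ≤ n
    · -- j = n
      haveI := hQfree hj'
      obtain ⟨Y, _, _, hYp, hYfin, hfree, hfin⟩ := exists_fg_compl (R := R) X
      haveI := hfree
      refine ⟨ModuleCat.of R Y, ⟨hYp, fun h => absurd (h.trans hj) (by omega),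
        fun _ => hYfin⟩, ?_, fun h => absurd (hj'.trans' h) (by omega)⟩
      -- X × Q × Y ≃ (X × Y) × Q, free
      exact Module.Free.of_equiv
        (((LinearEquiv.prodComm R (X × Y) Q).trans
            ((LinearEquiv.prodAssoc R Q X Y).symm.trans
              ((LinearEquiv.prodCongr (LinearEquiv.prodComm R Q X) (LinearEquiv.refl R Y)).trans
                (LinearEquiv.prodAssoc R X Q Y)))))
    · -- n + 1 ≤ j
      haveI := hQfin (by omega)
      haveI : Module.Projective R (X × Q) := projective_prod X Q
      obtain ⟨Y, _, _, hYp, hYfin, hfree, hfin⟩ := exists_fg_compl (R := R) (X × (Q : Type u))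
      haveI := hfree
      haveI := hfin
      refine ⟨ModuleCat.of R Y, ⟨hYp, fun h => absurd h (by omega), fun _ => hYfin⟩, ?_, fun _ => ?_⟩
      · exact Module.Free.of_equiv (LinearEquiv.prodAssoc R X Q Y)
      · exact Module.Finite.equiv (LinearEquiv.prodAssoc R X Q Y)
  · -- j < n : swindle
    haveI : Module.Projective R (X × Q) := projective_prod X Q
    obtain ⟨Y, _, _, hYp, hYfree, hfree⟩ := exists_swindle (R := R) (X × (Q : Type u))
    haveI := hfree
    refine ⟨ModuleCat.of R Y, ⟨hYp, fun _ => hYfree, fun h => absurd h (by omega)⟩, ?_,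
      fun h => absurd h (by omega)⟩
    exact Module.Free.of_equiv (LinearEquiv.prodAssoc R X Q Y)

/-- the sequence of complement modules -/
noncomputable def Qseq (n : ℕ) (X : ℕ → ModuleCat.{u} R)
    (hXp : ∀ j, Module.Projective R (X j)) (hX : ∀ j, n ≤ j → Module.Finite R (X j)) :
    ∀ j : ℕ, {Q : ModuleCat.{u} R // Good R n j Q}
  | 0 => ⟨ModuleCat.of R PUnit, inferInstance, fun _ => inferInstance, fun _ => inferInstance⟩
  | (j + 1) =>
    ⟨(exists_next R n j (X j) (Qseq n X hXp hX j).1 (hXp j) (hX j) (Qseq n X hXp hX j).2).choose,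
      (exists_next R n j (X j) (Qseq n X hXp hX j).1 (hXp j) (hX j)
        (Qseq n X hXp hX j).2).choose_spec.1⟩

theorem Qseq_spec (n : ℕ) (X : ℕ → ModuleCat.{u} R)
    (hXp : ∀ j, Module.Projective R (X j)) (hX : ∀ j, n ≤ j → Module.Finite R (X j)) (j : ℕ) :
    Module.Free R (X j × (Qseq R n X hXp hX j).1 × (Qseq R n X hXp hX (j + 1)).1) ∧
      (n + 1 ≤ j →
        Module.Finite R
          (X j × (Qseq R n X hXp hX j).1 × (Qseq R n X hXp hX (j + 1)).1)) := by
  have h := (exists_next R n j (X j) (Qseq R n X hXp hX j).1 (hXp j) (hX j)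
    (Qseq R n X hXp hX j).2).choose_spec
  exact ⟨h.2.1, h.2.2⟩

end FreeResAux
namespace FreeResAux

open CategoryTheory Limits HomologicalComplex

variable {R : Type u} [Ring R]

section cx

variable (n : ℕ) (K : ChainComplex (ModuleCat.{u} R) ℕ)
  (hXp : ∀ j, Module.Projective R (K.X j)) (hX : ∀ j, n ≤ j → Module.Finite R (K.X j))

/-- the complement modules -/
noncomputable def Qm (j : ℕ) : ModuleCat.{u} R := (Qseq R n K.X hXp hX j).1

theorem Qm_zero_subsingleton : Subsingleton (Qm n K hXp hX 0) :=
  inferInstanceAs (Subsingleton PUnit)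

/-- the contractible "disk" complex -/
noncomputable def Tcx : ChainComplex (ModuleCat.{u} R) ℕ :=
  ChainComplex.of (fun j => ModuleCat.of R (Qm n K hXp hX j × Qm n K hXp hX (j + 1)))
    (fun j => ModuleCat.ofHom (LinearMap.prod 0 (LinearMap.fst R _ _)))
    (fun j => by
      ext x <;> rfl)

/-- the contraction of `Tcx` -/
noncomputable def hT (j : ℕ) : (Tcx n K hXp hX).X j ⟶ (Tcx n K hXp hX).X (j + 1) :=
  ModuleCat.ofHom (LinearMap.prod (LinearMap.snd R (Qm n K hXp hX j) (Qm n K hXp hX (j + 1))) 0 :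
    (Qm n K hXp hX j × Qm n K hXp hX (j + 1)) →ₗ[R] _)

theorem hT_d_zero : hT n K hXp hX 0 ≫ (Tcx n K hXp hX).d 1 0 = 𝟙 ((Tcx n K hXp hX).X 0) := by
  have hd := ChainComplex.of_d (V := ModuleCat.{u} R)
    (fun j => ModuleCat.of R (Qm n K hXp hX j × Qm n K hXp hX (j + 1)))
    (fun j => ModuleCat.ofHom (LinearMap.prod 0 (LinearMap.fst R _ _))) 0
  rw [show (Tcx n K hXp hX).d 1 0 = _ from hd]
  ext x
  haveI := Qm_zero_subsingleton n K hXp hX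
  all_goals first | rfl | exact Subsingleton.elim (α := (Qm n K hXp hX 0 : Type u)) _ _

theorem d_hT_add (j : ℕ) :
    (Tcx n K hXp hX).d (j + 1) j ≫ hT n K hXp hX j +
        hT n K hXp hX (j + 1) ≫ (Tcx n K hXp hX).d (j + 2) (j + 1) =
      𝟙 ((Tcx n K hXp hX).X (j + 1)) := by
  have hd : ∀ i, (Tcx n K hXp hX).d (i + 1) i =
      ModuleCat.ofHom (LinearMap.prod 0 (LinearMap.fst R (Qm n K hXp hX (i + 1)) (Qm n K hXp hX (i + 2))) :
        _ →ₗ[R] _) := fun i => ChainComplex.of_d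
          (fun j => ModuleCat.of R (Qm n K hXp hX j × Qm n K hXp hX (j + 1)))
          (fun j => ModuleCat.ofHom (LinearMap.prod 0 (LinearMap.fst R _ _))) i
  rw [hd j, hd (j + 1)]
  ext x
  exact Prod.ext (add_zero x.1) (zero_add x.2)

end cx

end FreeResAux
namespace FreeResAux

open CategoryTheory Limits HomologicalComplex

variable {R : Type u} [Ring R]

section cx2

variable (n : ℕ) (K : ChainComplex (ModuleCat.{u} R) ℕ)
  (hXp : ∀ j, Module.Projective R (K.X j)) (hX : ∀ j, n ≤ j → Module.Finite R (K.X j))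

/-- the direct sum complex -/
noncomputable def Fcx : ChainComplex (ModuleCat.{u} R) ℕ := K ⊞ Tcx n K hXp hX

/-- components of the homotopy -/
noncomputable def hcomp (i : ℕ) : (Fcx n K hXp hX).X i ⟶ (Fcx n K hXp hX).X (i + 1) :=
  (biprod.snd : Fcx n K hXp hX ⟶ Tcx n K hXp hX).f i ≫ hT n K hXp hX i ≫
    (biprod.inr : Tcx n K hXp hX ⟶ Fcx n K hXp hX).f (i + 1)

theorem total_f (i : ℕ) :
    (biprod.fst : Fcx n K hXp hX ⟶ K).f i ≫ (biprod.inl : K ⟶ Fcx n K hXp hX).f i +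
      (biprod.snd : Fcx n K hXp hX ⟶ Tcx n K hXp hX).f i ≫
        (biprod.inr : Tcx n K hXp hX ⟶ Fcx n K hXp hX).f i = 𝟙 ((Fcx n K hXp hX).X i) := by
  have h := biprod.total (X := K) (Y := Tcx n K hXp hX)
  have h2 := congrArg (fun φ : Fcx n K hXp hX ⟶ Fcx n K hXp hX => φ.f i) h
  simp only [add_f_apply, comp_f, id_f] at h2
  exact h2

theorem hcomp_d :
    hcomp n K hXp hX 0 ≫ (Fcx n K hXp hX).d 1 0 =
      (biprod.snd : Fcx n K hXp hX ⟶ Tcx n K hXp hX).f 0 ≫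
        (biprod.inr : Tcx n K hXp hX ⟶ Fcx n K hXp hX).f 0 := by
  rw [hcomp]
  simp only [Fcx]
  rw [Category.assoc, Category.assoc,
    (biprod.inr : Tcx n K hXp hX ⟶ Fcx n K hXp hX).comm 1 0,
    ← Category.assoc (hT n K hXp hX 0), hT_d_zero, Category.id_comp]

theorem d_hcomp_add (i : ℕ) :
    (Fcx n K hXp hX).d (i + 1) i ≫ hcomp n K hXp hX i +
        hcomp n K hXp hX (i + 1) ≫ (Fcx n K hXp hX).d (i + 2) (i + 1) =
      (biprod.snd : Fcx n K hXp hX ⟶ Tcx n K hXp hX).f (i + 1) ≫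
        (biprod.inr : Tcx n K hXp hX ⟶ Fcx n K hXp hX).f (i + 1) := by
  have e1 : (Fcx n K hXp hX).d (i + 1) i ≫ hcomp n K hXp hX i =
      (biprod.snd : Fcx n K hXp hX ⟶ Tcx n K hXp hX).f (i + 1) ≫
        ((Tcx n K hXp hX).d (i + 1) i ≫ hT n K hXp hX i) ≫
          (biprod.inr : Tcx n K hXp hX ⟶ Fcx n K hXp hX).f (i + 1) := by
    simp only [Fcx, hcomp]
    rw [← Category.assoc,
      ← (biprod.snd : K ⊞ Tcx n K hXp hX ⟶ Tcx n K hXp hX).comm (i + 1) i]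
    simp only [Category.assoc]
  have e2 : hcomp n K hXp hX (i + 1) ≫ (Fcx n K hXp hX).d (i + 2) (i + 1) =
      (biprod.snd : Fcx n K hXp hX ⟶ Tcx n K hXp hX).f (i + 1) ≫
        (hT n K hXp hX (i + 1) ≫ (Tcx n K hXp hX).d (i + 2) (i + 1)) ≫
          (biprod.inr : Tcx n K hXp hX ⟶ Fcx n K hXp hX).f (i + 1) := by
    simp only [Fcx, hcomp]
    simp only [Category.assoc]
    rw [(biprod.inr : Tcx n K hXp hX ⟶ K ⊞ Tcx n K hXp hX).comm (i + 2) (i + 1)]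
  rw [e1, e2]
  erw [← Preadditive.comp_add, ← Preadditive.add_comp, d_hT_add, Category.id_comp]

/-- the homotopy between the identity and the projection to `K` -/
noncomputable def homotopyIdFcx :
    Homotopy (𝟙 (Fcx n K hXp hX)) ((biprod.fst : Fcx n K hXp hX ⟶ K) ≫ biprod.inl) where
  hom i j := if hij : i + 1 = j then hcomp n K hXp hX i ≫ eqToHom (congrArg _ hij) else 0
  zero i j h := by
    rw [dif_neg]
    intro hij
    exact h (by simp [hij])
  comm i := by
    obtain _ | i := i
    · rw [Homotopy.dNext_zero_chainComplex, Homotopy.prevD_chainComplex]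
      show 𝟙 _ = 0 + (dite (0 + 1 = 0 + 1) _ _) ≫ (Fcx n K hXp hX).d (0 + 1) 0 + _
      rw [dif_pos rfl, eqToHom_refl, Category.comp_id, hcomp_d]
      erw [zero_add,
        ← total_f n K hXp hX 0, add_comm, comp_f]
      rfl
    · rw [Homotopy.dNext_succ_chainComplex, Homotopy.prevD_chainComplex]
      show 𝟙 _ = (Fcx n K hXp hX).d (i + 1) i ≫ (dite (i + 1 = i + 1) _ _) +
        (dite (i + 1 + 1 = i + 1 + 1) _ _) ≫ (Fcx n K hXp hX).d (i + 1 + 1) (i + 1) + _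
      rw [dif_pos rfl, dif_pos rfl, eqToHom_refl, eqToHom_refl, Category.comp_id,
        Category.comp_id, d_hcomp_add]
      erw [← total_f n K hXp hX (i + 1), add_comm (_ ≫ _), comp_f]
      rfl

/-- the homotopy equivalence between `Fcx` and `K` -/
noncomputable def htpyEquivFcx : HomotopyEquiv (Fcx n K hXp hX) K where
  hom := biprod.fst
  inv := biprod.inl
  homotopyHomInvId := (homotopyIdFcx n K hXp hX).symm
  homotopyInvHomId := Homotopy.ofEq (by simp [Fcx])

end cx2

end FreeResAux
namespace FreeResAux

open CategoryTheory Limits HomologicalComplex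

variable {R : Type u} [Ring R]

variable (n : ℕ) (K : ChainComplex (ModuleCat.{u} R) ℕ)
  (hXp : ∀ j, Module.Projective R (K.X j)) (hX : ∀ j, n ≤ j → Module.Finite R (K.X j))

/-- linear description of the degreewise pieces of `Fcx` -/
noncomputable def FcxXEquiv (j : ℕ) :
    (((Fcx n K hXp hX).X j : Type u) ≃ₗ[R]
      (K.X j × (Qm n K hXp hX j × Qm n K hXp hX (j + 1)))) :=
  ((HomologicalComplex.biprodXIso K (Tcx n K hXp hX) j).trans
    (ModuleCat.biprodIsoProd (K.X j) ((Tcx n K hXp hX).X j))).toLinearEquiv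

theorem free_FcxX (j : ℕ) : Module.Free R ((Fcx n K hXp hX).X j) := by
  haveI : Module.Free R
      (K.X j × (Qm n K hXp hX j × Qm n K hXp hX (j + 1))) :=
    (Qseq_spec R n K.X hXp hX j).1
  exact Module.Free.of_equiv (FcxXEquiv n K hXp hX j).symm

theorem finite_FcxX (j : ℕ) (hj : n + 1 ≤ j) : Module.Finite R ((Fcx n K hXp hX).X j) := by
  haveI : Module.Finite R
      (K.X j × (Qm n K hXp hX j × Qm n K hXp hX (j + 1))) :=
    (Qseq_spec R n K.X hXp hX j).2 hj
  exact Module.Finite.equiv (FcxXEquiv n K hXp hX j).symm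

end FreeResAux

open CategoryTheory Limits

/-- If an `R`-module `M` has a projective resolution `P_*` with `P_j` finitely generated for all
`j ≥ n`, then `M` has a free resolution `F_*` with `F_j` finitely generated for all `j ≥ n + 1`. -/
theorem free_resolution_eventually_fg_of_projective_resolution_eventually_fg
    {R : Type u} [Ring R] (M : ModuleCat.{u} R) (n : ℕ)
    (P : ProjectiveResolution M)
    (hP : ∀ j, n ≤ j → Module.Finite R (P.complex.X j)) :
    ∃ F : ProjectiveResolution M,
      (∀ j, Module.Free R (F.complex.X j)) ∧
      (∀ j, n + 1 ≤ j → Module.Finite R (F.complex.X j)) := by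
  classical
  have hXp : ∀ j, Module.Projective R (P.complex.X j) := fun j =>
    (IsProjective.iff_projective (R := R) _).mpr
      (show Projective (ModuleCat.of R (P.complex.X j)) from P.projective j)
  haveI hq0 : QuasiIso ((FreeResAux.htpyEquivFcx n P.complex hXp hP).hom) := inferInstance
  haveI hq1 : QuasiIso (biprod.fst : FreeResAux.Fcx n P.complex hXp hP ⟶ P.complex) := hq0
  refine ⟨{ complex := FreeResAux.Fcx n P.complex hXp hP,
            projective := fun j => ?_,
            π := (biprod.fst : FreeResAux.Fcx n P.complex hXp hP ⟶ P.complex) ≫ P.π,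
            quasiIso := @quasiIso_comp _ _ _ _ _ _ _ _ _ _ _ _ _ hq1 _ },
          fun j => FreeResAux.free_FcxX n P.complex hXp hP j,
          fun j hj => FreeResAux.finite_FcxX n P.complex hXp hP j hj⟩
  haveI := FreeResAux.free_FcxX n P.complex hXp hP j
  have hpr : Module.Projective R ((FreeResAux.Fcx n P.complex hXp hP).X j) :=
    inferInstance
  exact (IsProjective.iff_projective (R := R) _).mp hpr
end

section
/- Let R be a ring and suppose 0 → N' → N → P_n → ⋯ → P_0 → M → 0 is an exact sequence of R-modules in which each P_i is projective, and both N' and N admit projective resolutions that are eventually finitely generated. Then the partial projective resolution P_n → ⋯ → P_0 → M → 0 extends to a projective resolution of M that is eventually finitely generated. -/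
universe u

open CategoryTheory CategoryTheory.Limits

namespace ExtendFGAux

variable {R : Type u} [Ring R]

@[simp] lemma hcomp_apply {A B C' : ModuleCat.{u} R} (f : A ⟶ B) (g : B ⟶ C') (x : A) :
    (f ≫ g) x = g (f x) := rfl

@[simp] lemma hzero_apply {A B : ModuleCat.{u} R} (x : A) : (0 : A ⟶ B) x = 0 := rfl

lemma exactAt_succ_iff (C : ChainComplex (ModuleCat.{u} R) ℕ) (i : ℕ) :
    C.ExactAt (i + 1) ↔
      LinearMap.range (C.d (i + 2) (i + 1)).hom = LinearMap.ker (C.d (i + 1) i).hom := by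
  rw [HomologicalComplex.exactAt_iff' C (i + 2) (i + 1) i (by simp) (by simp)]
  exact ShortComplex.moduleCat_exact_iff_range_eq_ker _

lemma quasiIso_to_single₀_iff (C : ChainComplex (ModuleCat.{u} R) ℕ)
    (M : ModuleCat.{u} R) (φ : C ⟶ (ChainComplex.single₀ (ModuleCat.{u} R)).obj M) :
    QuasiIso φ ↔ Function.Surjective (φ.f 0) ∧
      LinearMap.range (C.d 1 0).hom = LinearMap.ker (φ.f 0).hom ∧
      (∀ i : ℕ, LinearMap.range (C.d (i + 2) (i + 1)).hom = LinearMap.ker (C.d (i + 1) i).hom) := by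
  have h0 : QuasiIsoAt φ 0 ↔
      Function.Surjective (φ.f 0) ∧ LinearMap.range (C.d 1 0).hom = LinearMap.ker (φ.f 0).hom := by
    rw [ChainComplex.quasiIsoAt₀_iff, ShortComplex.quasiIso_iff_of_zeros']
    · rw [ShortComplex.moduleCat_exact_iff_range_eq_ker, ModuleCat.epi_iff_surjective]
      exact and_comm
    · exact C.shape 0 0 (by simp)
    · rfl
    · rfl
  have hs : ∀ i : ℕ, QuasiIsoAt φ (i + 1) ↔
      LinearMap.range (C.d (i + 2) (i + 1)).hom = LinearMap.ker (C.d (i + 1) i).hom := fun i => by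
    rw [quasiIsoAt_iff_exactAt' φ (i + 1) (ChainComplex.exactAt_succ_single_obj _ i),
      exactAt_succ_iff]
  rw [quasiIso_iff]
  constructor
  · intro h
    exact ⟨(h0.1 (h 0)).1, (h0.1 (h 0)).2, fun i => (hs i).1 (h (i + 1))⟩
  · rintro ⟨h1, h2, h3⟩ i
    cases i with
    | zero => exact h0.2 ⟨h1, h2⟩
    | succ i => exact (hs i).2 (h3 i)


lemma d_comp_single₀_f_zero {C : ChainComplex (ModuleCat.{u} R) ℕ} {M : ModuleCat.{u} R}
    (φ : C ⟶ (ChainComplex.single₀ (ModuleCat.{u} R)).obj M) :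
    C.d 1 0 ≫ φ.f 0 = 0 := by
  rw [← φ.comm 1 0]
  simp
  exact comp_zero

section Base

variable (C : ChainComplex (ModuleCat.{u} R) ℕ)
  (PN : ProjectiveResolution (C.X 1)) (PN' : ProjectiveResolution (C.X 2))

/-- lift of `C.d 2 1` to the chosen resolutions -/
noncomputable def bf : PN'.complex ⟶ PN.complex :=
  ProjectiveResolution.lift (C.d 2 1) PN' PN

noncomputable def bX : ℕ → ModuleCat.{u} R
  | 0 => C.X 0
  | 1 => PN.complex.X 0
  | (j+2) => ModuleCat.of R (PN'.complex.X j × PN.complex.X (j+1))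

noncomputable def bd : ∀ j, bX C PN PN' (j+1) ⟶ bX C PN PN' j
  | 0 => PN.π.f 0 ≫ C.d 1 0
  | 1 => ModuleCat.ofHom (LinearMap.coprod ((bf C PN PN').f 0).hom (PN.complex.d 1 0).hom)
  | (j+2) => ModuleCat.ofHom (LinearMap.prod
      (-(PN'.complex.d (j+1) j).hom.comp (LinearMap.fst R _ _))
      (((bf C PN PN').f (j+1)).hom.comp (LinearMap.fst R _ _) +
        (PN.complex.d (j+2) (j+1)).hom.comp (LinearMap.snd R _ _)))

@[simp] lemma bd_zero_apply (x : PN.complex.X 0) :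
    bd C PN PN' 0 x = C.d 1 0 (PN.π.f 0 x) := rfl

@[simp] lemma bd_one_apply (x : PN'.complex.X 0 × PN.complex.X 1) :
    bd C PN PN' 1 x = (bf C PN PN').f 0 x.1 + PN.complex.d 1 0 x.2 := rfl

@[simp] lemma bd_succ_apply_fst (j : ℕ) (x : PN'.complex.X (j+1) × PN.complex.X (j+2)) :
    (bd C PN PN' (j+2) x).1 = -(PN'.complex.d (j+1) j x.1) := rfl

@[simp] lemma bd_succ_apply_snd (j : ℕ) (x : PN'.complex.X (j+1) × PN.complex.X (j+2)) :
    (bd C PN PN' (j+2) x).2 =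
      (bf C PN PN').f (j+1) x.1 + PN.complex.d (j+2) (j+1) x.2 := rfl

lemma bf_comm (j : ℕ) (a : PN'.complex.X (j+1)) :
    PN.complex.d (j+1) j ((bf C PN PN').f (j+1) a) =
      (bf C PN PN').f j (PN'.complex.d (j+1) j a) := by
  have h := ConcreteCategory.congr_hom ((bf C PN PN').comm (j+1) j) a
  simp only [hcomp_apply] at h
  exact h

lemma bf_π (a : PN'.complex.X 0) :
    PN.π.f 0 ((bf C PN PN').f 0 a) = C.d 2 1 (PN'.π.f 0 a) := by
  have h := ConcreteCategory.congr_hom (ProjectiveResolution.lift_commutes_zero (C.d 2 1) PN' PN) a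
  simp only [hcomp_apply] at h
  exact h

lemma bπd (b : PN.complex.X 1) : PN.π.f 0 (PN.complex.d 1 0 b) = 0 := by
  have h := ConcreteCategory.congr_hom (d_comp_single₀_f_zero PN.π) b
  simp only [hcomp_apply, hzero_apply] at h
  exact h

lemma d_d_apply (D : ChainComplex (ModuleCat.{u} R) ℕ) (i j k : ℕ)
    (x : D.X i) : D.d j k (D.d i j x) = 0 := by
  have h := ConcreteCategory.congr_hom (D.d_comp_d i j k) x
  simp only [hcomp_apply, hzero_apply] at h
  exact h

lemma bd_sq : ∀ j, bd C PN PN' (j+1) ≫ bd C PN PN' j = 0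
  | 0 => by
    apply ModuleCat.hom_ext
    apply LinearMap.ext
    rintro ⟨a, b⟩
    show C.d 1 0 (PN.π.f 0 ((bf C PN PN').f 0 a + PN.complex.d 1 0 b)) = 0
    rw [map_add, bf_π C PN PN' a, bπd C PN b]
    erw [add_zero, d_d_apply]
  | 1 => by
    apply ModuleCat.hom_ext
    apply LinearMap.ext
    rintro ⟨a, b⟩
    show (bf C PN PN').f 0 (-(PN'.complex.d 1 0 a)) +
        PN.complex.d 1 0 ((bf C PN PN').f 1 a + PN.complex.d 2 1 b) = 0
    have h1 : PN.complex.d 1 0 ((bf C PN PN').f 1 a) =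
        (bf C PN PN').f 0 (PN'.complex.d 1 0 a) := bf_comm C PN PN' 0 a
    rw [map_neg, map_add, h1, d_d_apply, add_zero, neg_add_cancel]
  | (j+2) => by
    apply ModuleCat.hom_ext
    apply LinearMap.ext
    rintro ⟨a, b⟩
    refine Prod.ext ?_ ?_
    · show -(PN'.complex.d (j+1) j (-(PN'.complex.d (j+2) (j+1) a))) = (0 : _ × _).1
      rw [map_neg, neg_neg, d_d_apply]
      rfl
    · show (bf C PN PN').f (j+1) (-(PN'.complex.d (j+2) (j+1) a)) +
        PN.complex.d (j+2) (j+1) ((bf C PN PN').f (j+2) a + PN.complex.d (j+3) (j+2) b) =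
          (0 : _ × _).2
      have h1 : PN.complex.d (j+2) (j+1) ((bf C PN PN').f (j+2) a) =
          (bf C PN PN').f (j+1) (PN'.complex.d (j+2) (j+1) a) := bf_comm C PN PN' (j+1) a
      rw [map_neg, map_add, h1, d_d_apply, add_zero, neg_add_cancel]
      rfl


lemma range_le_ker {A B C' : ModuleCat.{u} R} (f : A ⟶ B) (g : B ⟶ C') (h : f ≫ g = 0) :
    LinearMap.range f.hom ≤ LinearMap.ker g.hom := by
  rintro x ⟨y, rfl⟩
  rw [LinearMap.mem_ker]
  have hy := ConcreteCategory.congr_hom h y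
  simp only [hcomp_apply, hzero_apply] at hy
  exact hy

lemma projective_of_prod (X Y : ModuleCat.{u} R) (hX : Projective X) (hY : Projective Y) :
    Projective (ModuleCat.of R (X × Y)) := by
  have hX' : Module.Projective R X :=
    (IsProjective.iff_projective _).2 hX
  have hY' : Module.Projective R Y :=
    (IsProjective.iff_projective _).2 hY
  exact (IsProjective.iff_projective _).1 inferInstance


noncomputable def bQ : ChainComplex (ModuleCat.{u} R) ℕ :=
  ChainComplex.of (bX C PN PN') (bd C PN PN') (bd_sq C PN PN')


variable {M : ModuleCat.{u} R}

lemma bexact_bot (π : C ⟶ (ChainComplex.single₀ (ModuleCat.{u} R)).obj M)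
    (hsurjB : Function.Surjective (PN.π.f 0))
    (hπ0 : LinearMap.range (C.d 1 0).hom = LinearMap.ker (π.f 0).hom) :
    LinearMap.range (bd C PN PN' 0).hom = LinearMap.ker (π.f 0).hom := by
  apply le_antisymm
  · rintro x ⟨y, rfl⟩
    rw [← hπ0]
    exact ⟨PN.π.f 0 y, rfl⟩
  · intro x hx
    rw [← hπ0] at hx
    obtain ⟨w, hw⟩ := hx
    obtain ⟨b, hb⟩ := hsurjB w
    exact ⟨b, by rw [bd_zero_apply, hb, hw]⟩

lemma bexact_zero
    (hC1 : LinearMap.range (C.d 2 1).hom = LinearMap.ker (C.d 1 0).hom)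
    (hsurjA : Function.Surjective (PN'.π.f 0))
    (hB0 : LinearMap.range (PN.complex.d 1 0).hom = LinearMap.ker (PN.π.f 0).hom) :
    LinearMap.range (bd C PN PN' 1).hom = LinearMap.ker (bd C PN PN' 0).hom := by
  apply le_antisymm
  · exact range_le_ker _ _ (bd_sq C PN PN' 0)
  · intro b hb
    obtain ⟨b, rfl⟩ : ∃ b' : PN.complex.X 0, b' = b := ⟨b, rfl⟩
    replace hb := LinearMap.mem_ker.1 hb
    rw [bd_zero_apply] at hb
    have h1 : (show C.X 1 from PN.π.f 0 b) ∈ LinearMap.ker (C.d 1 0).hom := LinearMap.mem_ker.2 hb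
    rw [← hC1] at h1
    obtain ⟨y, hy⟩ := h1
    obtain ⟨a, ha⟩ := hsurjA y
    have h2 : PN.π.f 0 (b - (bf C PN PN').f 0 a) = 0 := by
      rw [map_sub, bf_π C PN PN' a, ha, hy, sub_self]
    have h3 : b - (bf C PN PN').f 0 a ∈
        LinearMap.range (PN.complex.d 1 0).hom := by
      rw [hB0]; exact LinearMap.mem_ker.2 h2
    obtain ⟨b1, hb1⟩ := h3
    refine ⟨(a, b1), ?_⟩
    show (bf C PN PN').f 0 a + PN.complex.d 1 0 b1 = b
    rw [hb1]
    abel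

lemma bexact_one
    (hι : ∀ x : C.X 2, C.d 2 1 x = 0 → x = 0)
    (hA0 : LinearMap.range (PN'.complex.d 1 0).hom = LinearMap.ker (PN'.π.f 0).hom)
    (hB1 : LinearMap.range (PN.complex.d 2 1).hom = LinearMap.ker (PN.complex.d 1 0).hom) :
    LinearMap.range (bd C PN PN' 2).hom = LinearMap.ker (bd C PN PN' 1).hom := by
  apply le_antisymm
  · exact range_le_ker _ _ (bd_sq C PN PN' 1)
  · rintro ⟨a, b⟩ h
    replace h := LinearMap.mem_ker.1 h
    replace h : (bf C PN PN').f 0 a + PN.complex.d 1 0 b = 0 := h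
    have hfa : (bf C PN PN').f 0 a = -(PN.complex.d 1 0 b) :=
      eq_neg_of_add_eq_zero_left h
    have hεa : C.d 2 1 (PN'.π.f 0 a) = 0 := by
      rw [← bf_π C PN PN' a, hfa, map_neg, bπd C PN b, neg_zero]
      rfl
    have ha0 : PN'.π.f 0 a = 0 := hι _ hεa
    have h1 : a ∈ LinearMap.range (PN'.complex.d 1 0).hom := by
      rw [hA0]; exact LinearMap.mem_ker.2 ha0
    obtain ⟨a1, ha1⟩ := h1
    have h2 : PN.complex.d 1 0 ((bf C PN PN').f 1 a1 + b) = 0 := by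
      have hc : PN.complex.d 1 0 ((bf C PN PN').f 1 a1) =
          (bf C PN PN').f 0 (PN'.complex.d 1 0 a1) := bf_comm C PN PN' 0 a1
      rw [map_add, hc, ha1, h]
    have h3 : (bf C PN PN').f 1 a1 + b ∈ LinearMap.range (PN.complex.d 2 1).hom := by
      rw [hB1]; exact LinearMap.mem_ker.2 h2
    obtain ⟨b2, hb2⟩ := h3
    refine ⟨(-a1, b2), ?_⟩
    refine Prod.ext ?_ ?_
    · show -(PN'.complex.d 1 0 (-a1)) = a
      rw [map_neg, neg_neg, ha1]
    · show (bf C PN PN').f 1 (-a1) + PN.complex.d 2 1 b2 = b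
      rw [map_neg, hb2]
      abel

lemma bexact_succ (j : ℕ)
    (hAj : LinearMap.range (PN'.complex.d (j+2) (j+1)).hom = LinearMap.ker (PN'.complex.d (j+1) j).hom)
    (hBj : LinearMap.range (PN.complex.d (j+3) (j+2)).hom =
      LinearMap.ker (PN.complex.d (j+2) (j+1)).hom) :
    LinearMap.range (bd C PN PN' (j+3)).hom = LinearMap.ker (bd C PN PN' (j+2)).hom := by
  apply le_antisymm
  · exact range_le_ker _ _ (bd_sq C PN PN' (j+2))
  · rintro ⟨a, b⟩ h
    replace h := LinearMap.mem_ker.1 h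
    have h1f : -(PN'.complex.d (j+1) j a) = (0 : PN'.complex.X j) := congrArg Prod.fst h
    have h1 : PN'.complex.d (j+1) j a = 0 := neg_eq_zero.1 h1f
    have h2 : (bf C PN PN').f (j+1) a + PN.complex.d (j+2) (j+1) b = 0 :=
      congrArg Prod.snd h
    have h3 : a ∈ LinearMap.range (PN'.complex.d (j+2) (j+1)).hom := by
      rw [hAj]; exact LinearMap.mem_ker.2 h1
    obtain ⟨a1, ha1⟩ := h3
    have h4 : PN.complex.d (j+2) (j+1) ((bf C PN PN').f (j+2) a1 + b) = 0 := by
      have hc : PN.complex.d (j+2) (j+1) ((bf C PN PN').f (j+2) a1) =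
          (bf C PN PN').f (j+1) (PN'.complex.d (j+2) (j+1) a1) := bf_comm C PN PN' (j+1) a1
      rw [map_add, hc, ha1, h2]
    have h5 : (bf C PN PN').f (j+2) a1 + b ∈ LinearMap.range (PN.complex.d (j+3) (j+2)).hom := by
      rw [hBj]; exact LinearMap.mem_ker.2 h4
    obtain ⟨b2, hb2⟩ := h5
    refine ⟨(-a1, b2), ?_⟩
    refine Prod.ext ?_ ?_
    · show -(PN'.complex.d (j+2) (j+1) (-a1)) = a
      rw [map_neg, neg_neg, ha1]
    · show (bf C PN PN').f (j+2) (-a1) + PN.complex.d (j+3) (j+2) b2 = b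
      rw [map_neg, hb2]
      abel

end Base

section Step

variable (C : ChainComplex (ModuleCat.{u} R) ℕ) {M : ModuleCat.{u} R}
  (π : C ⟶ (ChainComplex.single₀ (ModuleCat.{u} R)).obj M)

/-- truncated complex, shifted down by one -/
noncomputable def tC : ChainComplex (ModuleCat.{u} R) ℕ :=
  ChainComplex.of (fun i => C.X (i+1)) (fun i => C.d (i+2) (i+1))
    (fun i => C.d_comp_d _ _ _)

/-- the kernel of the augmentation -/
noncomputable def tK : ModuleCat.{u} R := ModuleCat.of R (LinearMap.ker (π.f 0).hom)

/-- corestriction of `C.d 1 0` to the kernel of the augmentation -/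
noncomputable def tg : (tC C).X 0 ⟶ tK C π :=
  ModuleCat.ofHom <| LinearMap.codRestrict (LinearMap.ker (π.f 0).hom) (C.d 1 0).hom (fun x => by
    rw [LinearMap.mem_ker]
    have h := ConcreteCategory.congr_hom (d_comp_single₀_f_zero π) x
    simp only [hcomp_apply, hzero_apply] at h
    exact h)

noncomputable def tπ : tC C ⟶ (ChainComplex.single₀ (ModuleCat.{u} R)).obj (tK C π) :=
  (ChainComplex.toSingle₀Equiv _ _).symm ⟨tg C π, by
    have hd : (tC C).d 1 0 = C.d 2 1 := ChainComplex.of_d (fun i => C.X (i+1)) (fun i => C.d (i+2) (i+1)) 0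
    rw [hd]
    apply ModuleCat.hom_ext
    apply LinearMap.ext
    intro x
    apply Subtype.ext
    show C.d 1 0 (C.d 2 1 x) = 0
    exact d_d_apply C 2 1 0 x⟩

lemma tπ_f_zero : (tπ C π).f 0 = tg C π :=
  ChainComplex.toSingle₀Equiv_symm_apply_f_zero _ _

variable (P0 : ModuleCat.{u} R) (D : ChainComplex (ModuleCat.{u} R) ℕ) (δ : D.X 0 ⟶ P0)

noncomputable def sX : ℕ → ModuleCat.{u} R
  | 0 => P0
  | (i+1) => D.X i

noncomputable def sd : ∀ i, sX P0 D (i+1) ⟶ sX P0 D i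
  | 0 => δ
  | (i+1) => D.d (i+1) i

lemma sd_sq (hδ : D.d 1 0 ≫ δ = 0) : ∀ i, sd P0 D δ (i+1) ≫ sd P0 D δ i = 0
  | 0 => hδ
  | (i+1) => D.d_comp_d _ _ _

noncomputable def sQ (hδ : D.d 1 0 ≫ δ = 0) : ChainComplex (ModuleCat.{u} R) ℕ :=
  ChainComplex.of (sX P0 D) (sd P0 D δ) (sd_sq P0 D δ hδ)

end Step

end ExtendFGAux

open ExtendFGAux


/-- Suppose `0 → N' → N → P_n → ⋯ → P_0 → M → 0` is an exact sequence of `R`-modules in which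
each `P_i` is projective and both `N'` and `N` admit projective resolutions that are eventually
finitely generated.  We encode the sequence as a chain complex `C` with `C_i = P_i` for `i ≤ n`,
`C_{n+1} = N`, `C_{n+2} = N'` and `C_i = 0` for `i > n + 2`, together with a quasi-isomorphism
`π : C ⟶ M[0]` (which says exactly that the augmented sequence is exact).  Then the partial
projective resolution `P_n → ⋯ → P_0 → M → 0` can be extended to a projective resolution of `M`
that is eventually finitely generated. -/
theorem extend_partial_projective_resolution_eventually_fg
    {R : Type u} [Ring R] (n : ℕ) (M : ModuleCat.{u} R)
    (C : ChainComplex (ModuleCat.{u} R) ℕ)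
    (hproj : ∀ i, i ≤ n → Projective (C.X i))
    (hzero : ∀ i, n + 2 < i → IsZero (C.X i))
    (π : C ⟶ (ChainComplex.single₀ (ModuleCat.{u} R)).obj M)
    (hπ : QuasiIso π)
    (hN : ∃ (PN : ProjectiveResolution (C.X (n + 1))) (k : ℕ),
      ∀ j, k ≤ j → Module.Finite R (PN.complex.X j))
    (hN' : ∃ (PN' : ProjectiveResolution (C.X (n + 2))) (k : ℕ),
      ∀ j, k ≤ j → Module.Finite R (PN'.complex.X j)) :
    ∃ (Q : ProjectiveResolution M) (e : ∀ i, i ≤ n → (Q.complex.X i ≅ C.X i)),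
      (∃ k : ℕ, ∀ j, k ≤ j → Module.Finite R (Q.complex.X j)) ∧
      (∀ i (h : i + 1 ≤ n),
        Q.complex.d (i + 1) i ≫ (e i (Nat.le_of_succ_le h)).hom =
          (e (i + 1) h).hom ≫ C.d (i + 1) i) ∧
      Q.π.f 0 = (e 0 (Nat.zero_le n)).hom ≫ π.f 0 := by
  induction n generalizing M C with
  | zero =>
    obtain ⟨PN, kB, hkB⟩ := hN
    obtain ⟨PN', kA, hkA⟩ := hN'
    obtain ⟨hsurjπ, hπ0, hπi⟩ := (quasiIso_to_single₀_iff C M π).1 hπ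
    obtain ⟨hsurjB, hB0, hBi⟩ := (quasiIso_to_single₀_iff _ _ PN.π).1 PN.quasiIso
    obtain ⟨hsurjA, hA0, hAi⟩ := (quasiIso_to_single₀_iff _ _ PN'.π).1 PN'.quasiIso
    have hd32 : C.d 3 2 = 0 := (hzero 3 (by omega)).eq_of_src _ _
    have hι : ∀ x : C.X 2, C.d 2 1 x = 0 → x = 0 := by
      intro x hx
      have h32 : LinearMap.range (C.d 3 2).hom = LinearMap.ker (C.d 2 1).hom := hπi 1
      have hm : x ∈ LinearMap.range (C.d 3 2).hom := by
        rw [h32]; exact LinearMap.mem_ker.2 hx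
      obtain ⟨y, hy⟩ := hm
      rw [hd32] at hy
      rw [← hy]
      rfl
    have hC1 : LinearMap.range (C.d 2 1).hom = LinearMap.ker (C.d 1 0).hom := hπi 0
    have hB1 : LinearMap.range (PN.complex.d 2 1).hom = LinearMap.ker (PN.complex.d 1 0).hom := hBi 0
    have hw : (bQ C PN PN').d 1 0 ≫ π.f 0 = 0 := by
      have hd : (bQ C PN PN').d 1 0 = bd C PN PN' 0 := ChainComplex.of_d (bX C PN PN') (bd C PN PN') 0
      rw [hd]
      apply ModuleCat.hom_ext
      apply LinearMap.ext
      intro x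
      show π.f 0 (C.d 1 0 (PN.π.f 0 x)) = 0
      have hm : C.d 1 0 (PN.π.f 0 x) ∈ LinearMap.ker (π.f 0).hom := by
        rw [← hπ0]; exact ⟨_, rfl⟩
      exact LinearMap.mem_ker.1 hm
    have hq : QuasiIso ((ChainComplex.toSingle₀Equiv (bQ C PN PN') M).symm ⟨π.f 0, hw⟩) := by
      rw [quasiIso_to_single₀_iff, ChainComplex.toSingle₀Equiv_symm_apply_f_zero (C := bQ C PN PN') (X := M) (π.f 0) hw]
      refine ⟨hsurjπ, ?_, ?_⟩
      · have hd : (bQ C PN PN').d 1 0 = bd C PN PN' 0 := ChainComplex.of_d (bX C PN PN') (bd C PN PN') 0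
        rw [hd]
        exact bexact_bot C PN PN' π hsurjB hπ0
      · intro i
        have hd1 : (bQ C PN PN').d (i+2) (i+1) = bd C PN PN' (i+1) :=
          ChainComplex.of_d (bX C PN PN') (bd C PN PN') (i+1)
        have hd2 : (bQ C PN PN').d (i+1) i = bd C PN PN' i := ChainComplex.of_d (bX C PN PN') (bd C PN PN') i
        rw [hd1, hd2]
        obtain (_|(_|j)) := i
        · exact bexact_zero C PN PN' hC1 hsurjA hB0
        · exact bexact_one C PN PN' hι hA0 hB1
        · exact bexact_succ C PN PN' j (hAi j) (hBi (j+1))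
    refine ⟨{ complex := bQ C PN PN'
              projective := ?_
              π := (ChainComplex.toSingle₀Equiv (bQ C PN PN') M).symm ⟨π.f 0, hw⟩
              quasiIso := hq },
            fun i hi => match i, hi with
              | 0, _ => Iso.refl (C.X 0)
              | (i+1), hi => absurd hi (Nat.not_succ_le_zero i),
            ⟨kA + kB + 2, ?_⟩, fun i h => absurd h (by omega), ?_⟩
    · intro m
      obtain (_|(_|j)) := m
      · exact hproj 0 le_rfl
      · exact PN.projective 0
      · exact projective_of_prod _ _ (PN'.projective j) (PN.projective (j+1))
    · intro j hj
      obtain ⟨l, rfl⟩ : ∃ l, j = l + 2 := ⟨j - 2, by omega⟩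
      haveI := hkA l (by omega)
      haveI := hkB (l+1) (by omega)
      show Module.Finite R (↥(PN'.complex.X l) × ↥(PN.complex.X (l+1)))
      infer_instance
    · show ((ChainComplex.toSingle₀Equiv (bQ C PN PN') M).symm ⟨π.f 0, hw⟩).f 0 =
        (Iso.refl (C.X 0)).hom ≫ π.f 0
      rw [ChainComplex.toSingle₀Equiv_symm_apply_f_zero (C := bQ C PN PN') (X := M) (π.f 0) hw]
      simp
      exact (Category.id_comp _).symm
  | succ m ih =>
    obtain ⟨hsurjπ, hπ0, hπi⟩ := (quasiIso_to_single₀_iff C M π).1 hπ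
    have hπ' : QuasiIso (tπ C π) := by
      rw [quasiIso_to_single₀_iff, tπ_f_zero]
      refine ⟨?_, ?_, ?_⟩
      · rintro ⟨y, hy⟩
        have hy' : y ∈ LinearMap.range (C.d 1 0).hom := by rw [hπ0]; exact hy
        obtain ⟨x, hx⟩ := hy'
        exact ⟨x, Subtype.ext hx⟩
      · have hd : (tC C).d 1 0 = C.d 2 1 := ChainComplex.of_d (fun i => C.X (i+1)) (fun i => C.d (i+2) (i+1)) 0
        rw [hd]
        apply le_antisymm
        · rintro _ ⟨y, rfl⟩
          rw [LinearMap.mem_ker]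
          apply Subtype.ext
          show C.d 1 0 (C.d 2 1 y) = 0
          exact d_d_apply C 2 1 0 y
        · intro x hx
          rw [LinearMap.mem_ker] at hx
          have hx0 : C.d 1 0 x = 0 := congrArg Subtype.val hx
          have h10 : LinearMap.range (C.d 2 1).hom = LinearMap.ker (C.d 1 0).hom := hπi 0
          erw [h10]
          exact hx0
      · intro i
        have hd1 : (tC C).d (i+2) (i+1) = C.d (i+3) (i+2) := ChainComplex.of_d (fun i => C.X (i+1)) (fun i => C.d (i+2) (i+1)) (i+1)
        have hd2 : (tC C).d (i+1) i = C.d (i+2) (i+1) := ChainComplex.of_d (fun i => C.X (i+1)) (fun i => C.d (i+2) (i+1)) i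
        rw [hd1, hd2]
        exact hπi (i+1)
    obtain ⟨Q', e', hfg', hd', hπc'⟩ := ih (tK C π) (tC C)
      (fun i hi => hproj (i+1) (by omega)) (fun i hi => hzero (i+1) (by omega))
      (tπ C π) hπ' hN hN'
    obtain ⟨kQ, hkQ⟩ := hfg'
    obtain ⟨hsurjQ', hQ'0, hQ'i⟩ := (quasiIso_to_single₀_iff _ _ Q'.π).1 Q'.quasiIso
    have hδ0 : Q'.complex.d 1 0 ≫ (Q'.π.f 0 ≫ ModuleCat.ofHom (LinearMap.ker (π.f 0).hom).subtype) = 0 := by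
      exact (Category.assoc _ _ _).symm.trans
        ((congrArg (· ≫ _) (d_comp_single₀_f_zero Q'.π)).trans zero_comp)
    have hwπ : (sQ (C.X 0) Q'.complex (Q'.π.f 0 ≫ ModuleCat.ofHom (LinearMap.ker (π.f 0).hom).subtype) hδ0).d 1 0 ≫
        π.f 0 = 0 := by
      have hd : (sQ (C.X 0) Q'.complex (Q'.π.f 0 ≫ ModuleCat.ofHom (LinearMap.ker (π.f 0).hom).subtype) hδ0).d 1 0 =
          sd (C.X 0) Q'.complex (Q'.π.f 0 ≫ ModuleCat.ofHom (LinearMap.ker (π.f 0).hom).subtype) 0 :=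
        ChainComplex.of_d (sX (C.X 0) Q'.complex) (sd (C.X 0) Q'.complex (Q'.π.f 0 ≫ ModuleCat.ofHom (LinearMap.ker (π.f 0).hom).subtype)) 0
      rw [hd]
      apply ModuleCat.hom_ext
      apply LinearMap.ext
      intro x
      show π.f 0 ((LinearMap.ker (π.f 0).hom).subtype (Q'.π.f 0 x)) = 0
      exact LinearMap.mem_ker.1 (Q'.π.f 0 x).2
    have hq : QuasiIso ((ChainComplex.toSingle₀Equiv
        (sQ (C.X 0) Q'.complex (Q'.π.f 0 ≫ ModuleCat.ofHom (LinearMap.ker (π.f 0).hom).subtype) hδ0) M).symm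
        ⟨π.f 0, hwπ⟩) := by
      rw [quasiIso_to_single₀_iff, ChainComplex.toSingle₀Equiv_symm_apply_f_zero (C := sQ (C.X 0) Q'.complex (Q'.π.f 0 ≫ ModuleCat.ofHom (LinearMap.ker (π.f 0).hom).subtype) hδ0) (X := M) (π.f 0) hwπ]
      refine ⟨hsurjπ, ?_, ?_⟩
      · have hd : (sQ (C.X 0) Q'.complex (Q'.π.f 0 ≫ ModuleCat.ofHom (LinearMap.ker (π.f 0).hom).subtype) hδ0).d 1 0 =
            sd (C.X 0) Q'.complex (Q'.π.f 0 ≫ ModuleCat.ofHom (LinearMap.ker (π.f 0).hom).subtype) 0 :=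
          ChainComplex.of_d (sX (C.X 0) Q'.complex) (sd (C.X 0) Q'.complex (Q'.π.f 0 ≫ ModuleCat.ofHom (LinearMap.ker (π.f 0).hom).subtype)) 0
        rw [hd]
        apply le_antisymm
        · rintro _ ⟨y, rfl⟩
          rw [LinearMap.mem_ker]
          show π.f 0 ((LinearMap.ker (π.f 0).hom).subtype (Q'.π.f 0 y)) = 0
          exact LinearMap.mem_ker.1 (Q'.π.f 0 y).2
        · intro x hx
          obtain ⟨y, hy⟩ := hsurjQ' (⟨x, hx⟩ : LinearMap.ker (π.f 0).hom)
          refine ⟨y, ?_⟩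
          show (LinearMap.ker (π.f 0).hom).subtype (Q'.π.f 0 y) = x
          rw [hy]
          rfl
      · intro i
        have hd1 : (sQ (C.X 0) Q'.complex (Q'.π.f 0 ≫ ModuleCat.ofHom (LinearMap.ker (π.f 0).hom).subtype) hδ0).d
              (i+2) (i+1) =
            sd (C.X 0) Q'.complex (Q'.π.f 0 ≫ ModuleCat.ofHom (LinearMap.ker (π.f 0).hom).subtype) (i+1) :=
          ChainComplex.of_d (sX (C.X 0) Q'.complex) (sd (C.X 0) Q'.complex (Q'.π.f 0 ≫ ModuleCat.ofHom (LinearMap.ker (π.f 0).hom).subtype)) (i+1)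
        have hd2 : (sQ (C.X 0) Q'.complex (Q'.π.f 0 ≫ ModuleCat.ofHom (LinearMap.ker (π.f 0).hom).subtype) hδ0).d
              (i+1) i =
            sd (C.X 0) Q'.complex (Q'.π.f 0 ≫ ModuleCat.ofHom (LinearMap.ker (π.f 0).hom).subtype) i :=
          ChainComplex.of_d (sX (C.X 0) Q'.complex) (sd (C.X 0) Q'.complex (Q'.π.f 0 ≫ ModuleCat.ofHom (LinearMap.ker (π.f 0).hom).subtype)) i
        rw [hd1, hd2]
        obtain (_|i) := i
        · apply le_antisymm
          · rintro _ ⟨y, rfl⟩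
            rw [LinearMap.mem_ker]
            show (LinearMap.ker (π.f 0).hom).subtype (Q'.π.f 0 (Q'.complex.d 1 0 y)) = 0
            have h0 : Q'.π.f 0 (Q'.complex.d 1 0 y) = 0 := by
              have h := ConcreteCategory.congr_hom (d_comp_single₀_f_zero Q'.π) (show Q'.complex.X 1 from y)
              simp only [hcomp_apply, hzero_apply] at h
              exact h
            rw [h0]
            exact map_zero _
          · intro x hx
            rw [LinearMap.mem_ker] at hx
            replace hx : (LinearMap.ker (π.f 0).hom).subtype (Q'.π.f 0 x) = 0 := hx
            have h1 : Q'.π.f 0 x = 0 := Subtype.ext hx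
            have h2 : (show Q'.complex.X 0 from x) ∈ LinearMap.ker (Q'.π.f 0).hom := LinearMap.mem_ker.2 h1
            rw [← hQ'0] at h2
            exact h2
        · exact hQ'i i
    refine ⟨{ complex := sQ (C.X 0) Q'.complex (Q'.π.f 0 ≫ ModuleCat.ofHom (LinearMap.ker (π.f 0).hom).subtype) hδ0
              projective := ?_
              π := (ChainComplex.toSingle₀Equiv
                (sQ (C.X 0) Q'.complex (Q'.π.f 0 ≫ ModuleCat.ofHom (LinearMap.ker (π.f 0).hom).subtype) hδ0) M).symm
                ⟨π.f 0, hwπ⟩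
              quasiIso := hq },
            fun i hi => match i, hi with
              | 0, _ => Iso.refl (C.X 0)
              | (i+1), hi => e' i (by omega),
            ⟨kQ + 1, ?_⟩, ?_, ?_⟩
    · intro j
      obtain (_|j) := j
      · exact hproj 0 (by omega)
      · exact Q'.projective j
    · intro j hj
      obtain ⟨l, rfl⟩ : ∃ l, j = l + 1 := ⟨j - 1, by omega⟩
      exact hkQ l (by omega)
    · intro i h
      obtain (_|i) := i
      · have hd : (sQ (C.X 0) Q'.complex (Q'.π.f 0 ≫ ModuleCat.ofHom (LinearMap.ker (π.f 0).hom).subtype) hδ0).d 1 0 =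
            sd (C.X 0) Q'.complex (Q'.π.f 0 ≫ ModuleCat.ofHom (LinearMap.ker (π.f 0).hom).subtype) 0 :=
          ChainComplex.of_d (sX (C.X 0) Q'.complex) (sd (C.X 0) Q'.complex (Q'.π.f 0 ≫ ModuleCat.ofHom (LinearMap.ker (π.f 0).hom).subtype)) 0
        show (sQ (C.X 0) Q'.complex (Q'.π.f 0 ≫ ModuleCat.ofHom (LinearMap.ker (π.f 0).hom).subtype) hδ0).d 1 0 ≫
            (Iso.refl (C.X 0)).hom = (e' 0 (Nat.zero_le m)).hom ≫ C.d 1 0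
        rw [hd]
        show (Q'.π.f 0 ≫ ModuleCat.ofHom (LinearMap.ker (π.f 0).hom).subtype) ≫ 𝟙 (C.X 0) =
          (e' 0 (Nat.zero_le m)).hom ≫ C.d 1 0
        rw [Category.comp_id, hπc', tπ_f_zero]
        have hsub : (tg C π) ≫ (ModuleCat.ofHom (LinearMap.ker (π.f 0).hom).subtype :
            (((ChainComplex.single₀ (ModuleCat.{u} R)).obj (tK C π)).X 0 ⟶ C.X 0)) = C.d 1 0 := by
          apply ModuleCat.hom_ext
          apply LinearMap.ext
          intro x
          rfl
        exact (Category.assoc _ _ _).trans (congrArg (_ ≫ ·) hsub)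
      · have h' : i + 1 ≤ m := by omega
        have hd1 : (sQ (C.X 0) Q'.complex (Q'.π.f 0 ≫ ModuleCat.ofHom (LinearMap.ker (π.f 0).hom).subtype) hδ0).d
              (i+2) (i+1) =
            sd (C.X 0) Q'.complex (Q'.π.f 0 ≫ ModuleCat.ofHom (LinearMap.ker (π.f 0).hom).subtype) (i+1) :=
          ChainComplex.of_d (sX (C.X 0) Q'.complex) (sd (C.X 0) Q'.complex (Q'.π.f 0 ≫ ModuleCat.ofHom (LinearMap.ker (π.f 0).hom).subtype)) (i+1)
        have htd : (tC C).d (i+1) i = C.d (i+2) (i+1) := ChainComplex.of_d (fun i => C.X (i+1)) (fun i => C.d (i+2) (i+1)) i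
        have hmain := hd' i h'
        rw [htd] at hmain
        show (sQ (C.X 0) Q'.complex (Q'.π.f 0 ≫ ModuleCat.ofHom (LinearMap.ker (π.f 0).hom).subtype) hδ0).d
            (i+2) (i+1) ≫ (e' i (by omega)).hom = (e' (i+1) (by omega)).hom ≫ C.d (i+2) (i+1)
        rw [hd1]
        exact hmain
    · show ((ChainComplex.toSingle₀Equiv
          (sQ (C.X 0) Q'.complex (Q'.π.f 0 ≫ ModuleCat.ofHom (LinearMap.ker (π.f 0).hom).subtype) hδ0) M).symm
          ⟨π.f 0, hwπ⟩).f 0 = (Iso.refl (C.X 0)).hom ≫ π.f 0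
      rw [ChainComplex.toSingle₀Equiv_symm_apply_f_zero (C := sQ (C.X 0) Q'.complex (Q'.π.f 0 ≫ ModuleCat.ofHom (LinearMap.ker (π.f 0).hom).subtype) hδ0) (X := M) (π.f 0) hwπ]
      simp
      exact (Category.id_comp _).symm
end

section
/- Let G be a group and M a ZG-module such that Hom-underline_{ZG}(M, −) preserves filtered colimits. Write M as the filtered colimit of its finitely generated submodules M_λ. Then there exists λ such that the quotient map M → M/M_λ factors through a projective ZG-module, and consequently M is isomorphic to a direct summand of Q ⊕ M_λ for some projective module Q. -/
universe u

open CategoryTheory CategoryTheory.Limits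

variable {R : Type u} [Ring R]

/-- The additive subgroup of `Hom_R(M, N)` consisting of homomorphisms that factor through a
projective module. -/
def projFactor (M N : ModuleCat.{u} R) : AddSubgroup (M ⟶ N) where
  carrier := {f | ∃ P : ModuleCat.{u} R, Module.Projective R P ∧
    ∃ (g : M ⟶ P) (h : P ⟶ N), g ≫ h = f}
  zero_mem' := ⟨ModuleCat.of R R, inferInstanceAs (Module.Projective R R), 0, 0, by simp⟩
  add_mem' := by
    rintro a b ⟨P₁, hP₁, g₁, h₁, rfl⟩ ⟨P₂, hP₂, g₂, h₂, rfl⟩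
    haveI := hP₁; haveI := hP₂
    exact ⟨ModuleCat.of R (P₁ × P₂), inferInstanceAs (Module.Projective R (P₁ × P₂)),
      ModuleCat.ofHom (LinearMap.prod g₁.hom g₂.hom),
      ModuleCat.ofHom (h₁.hom.comp (LinearMap.fst R P₁ P₂) + h₂.hom.comp (LinearMap.snd R P₁ P₂)),
      by ext x; rfl⟩
  neg_mem' := by
    rintro a ⟨P, hP, g, h, rfl⟩
    exact ⟨P, hP, g, -h, by ext x; rfl⟩

/-- The map on stable Hom groups induced by postcomposition with `φ`. -/
def uHomMap (M : ModuleCat.{u} R) {N N' : ModuleCat.{u} R} (φ : N ⟶ N') :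
    (M ⟶ N) ⧸ projFactor M N →+ (M ⟶ N') ⧸ projFactor M N' :=
  QuotientAddGroup.map _ _
    (AddMonoidHom.mk' (fun f => f ≫ φ) (fun f g => by simp [Preadditive.add_comp]))
    (by
      rintro f ⟨P, hP, g, h, rfl⟩
      exact ⟨P, hP, g, h ≫ φ, by simp⟩)

/-- The stable Hom functor `Hom-underline_R(M, −)`: the quotient of `Hom_R(M, −)` by the maps
factoring through a projective module. -/
def uHom (M : ModuleCat.{u} R) : ModuleCat.{u} R ⥤ AddCommGrpCat.{u} where
  obj N := AddCommGrpCat.of ((M ⟶ N) ⧸ projFactor M N)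
  map φ := AddCommGrpCat.ofHom (uHomMap M φ)
  map_id N := by
    ext f
    simp [uHomMap]
  map_comp {N N' N''} φ ψ := by
    ext f
    simp [uHomMap]


/-- Split surjection gives a product decomposition. -/
noncomputable def splitEquivAux {Y M : Type u} [AddCommGroup Y] [AddCommGroup M]
    [Module R Y] [Module R M] (f : Y →ₗ[R] M) (s : M →ₗ[R] Y)
    (hfs : f ∘ₗ s = LinearMap.id) : Y ≃ₗ[R] M × LinearMap.ker f where
  toFun y := ⟨f y, ⟨y - s (f y), by
    have h := LinearMap.congr_fun hfs (f y)
    simp only [LinearMap.comp_apply, LinearMap.id_apply] at h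
    simp [LinearMap.mem_ker, map_sub, h]⟩⟩
  invFun p := s p.1 + p.2.1
  map_add' y z := by ext <;> simp <;> abel
  map_smul' r y := by ext <;> simp [smul_sub]
  left_inv y := by simp
  right_inv p := by
    have hk : f p.2.1 = 0 := p.2.2
    have h := LinearMap.congr_fun hfs p.1
    simp only [LinearMap.comp_apply, LinearMap.id_apply] at h
    ext
    · simp [map_add, h, hk]
    · simp [map_add, h, hk]

section Diagram
variable (M : ModuleCat.{u} R)

abbrev FGSub := {N : Submodule R M // N.FG}

instance : Nonempty (FGSub M) := ⟨⊥, Submodule.fg_bot⟩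

instance : IsDirected (FGSub M) (· ≤ ·) :=
  ⟨fun a b => ⟨⟨a.1 ⊔ b.1, Submodule.FG.sup a.2 b.2⟩, Subtype.coe_le_coe.mp le_sup_left, Subtype.coe_le_coe.mp le_sup_right⟩⟩

/-- The diagram of quotients by finitely generated submodules. -/
def quotDiagram : FGSub M ⥤ ModuleCat.{u} R where
  obj N := ModuleCat.of R (M ⧸ N.1)
  map {N N'} f := ModuleCat.ofHom (Submodule.mapQ N.1 N'.1 LinearMap.id (by simpa using leOfHom f))
  map_id N := by
    ext x
    rfl
  map_comp f g := by
    ext x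
    rfl

/-- The zero cocone over the quotient diagram. -/
def quotCocone : Cocone (quotDiagram M) where
  pt := ModuleCat.of R PUnit
  ι := { app := fun N => 0, naturality := fun _ _ _ => by ext x; rfl }

lemma cocone_app_eq_zero (s : Cocone (quotDiagram M)) (N : FGSub M) : s.ι.app N = 0 := by
  ext x
  refine Submodule.Quotient.induction_on _ x (fun m => ?_)
  let N' : FGSub M := ⟨N.1 ⊔ Submodule.span R {m}, Submodule.FG.sup N.2 (Submodule.fg_span_singleton m)⟩
  have hle : N ⟶ N' := homOfLE (Subtype.coe_le_coe.mp le_sup_left)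
  have := s.ι.naturality hle
  have h2 : ((quotDiagram M).map hle) (Submodule.Quotient.mk m) = 0 := by
    show (N.1).mapQ N'.1 LinearMap.id (leOfHom hle) (Submodule.Quotient.mk m) = 0
    rw [Submodule.mapQ_apply, LinearMap.id_apply, Submodule.Quotient.mk_eq_zero]
    exact (le_sup_right : Submodule.span R {m} ≤ _) (Submodule.mem_span_singleton_self m)
  calc s.ι.app N (Submodule.Quotient.mk m)
      = s.ι.app N' (((quotDiagram M).map hle) (Submodule.Quotient.mk m)) := by
        exact (LinearMap.congr_fun (congr_arg ModuleCat.Hom.hom this) (Submodule.Quotient.mk m)).symm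
    _ = s.ι.app N' 0 := by rw [h2]
    _ = 0 := map_zero _
  
/-- The zero cocone is a colimit. -/
def quotIsColimit : IsColimit (quotCocone M) where
  desc s := 0
  fac s N := by
    rw [cocone_app_eq_zero M s N]
    ext x
    simp [quotCocone]
    rfl
  uniq s m hm := by
    ext (x : PUnit)
    have hx : x = 0 := Subsingleton.elim _ _
    rw [hx]; exact (map_zero m.hom).trans (map_zero (0 : (quotCocone M).pt ⟶ s.pt).hom).symm

end Diagram

section Schanuel

/-- An element of `uHom M` at an object is zero iff the hom factors through a projective. -/
theorem uHom_subsingleton_pt (M : ModuleCat.{u} R) :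
    Subsingleton ((uHom M).obj (quotCocone M).pt) := by
  haveI : Subsingleton ((quotCocone M).pt : Type u) := inferInstanceAs (Subsingleton PUnit)
  have : Subsingleton (M ⟶ (quotCocone M).pt) := by
    constructor
    intro a b
    ext x
    exact Subsingleton.elim _ _
  constructor
  intro a b
  refine QuotientAddGroup.induction_on a (fun f => QuotientAddGroup.induction_on b (fun g => ?_))
  rw [Subsingleton.elim f g]

end Schanuel

/-- Let `G` be a group and `M` a `ℤG`-module such that the stable Hom functor
`Hom-underline_{ℤG}(M, −)` preserves filtered colimits.  Then there is a finitely generated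
submodule `M₀ ≤ M` such that the quotient map `M → M/M₀` factors through a projective module
`Q`, and consequently `M` is isomorphic to a direct summand of `Q ⊕ M₀`. -/
theorem stableHom_finitary_implies_summand
    {G : Type u} [Group G] (M : ModuleCat.{u} (MonoidAlgebra ℤ G))
    (h : PreservesFilteredColimits (uHom M)) :
    ∃ M₀ : Submodule (MonoidAlgebra ℤ G) M, M₀.FG ∧
      ∃ (Q : Type u) (_ : AddCommGroup Q) (_ : Module (MonoidAlgebra ℤ G) Q),
        Module.Projective (MonoidAlgebra ℤ G) Q ∧
        (∃ (g : M →ₗ[MonoidAlgebra ℤ G] Q) (h' : Q →ₗ[MonoidAlgebra ℤ G] (M ⧸ M₀)),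
          h' ∘ₗ g = M₀.mkQ) ∧
        ∃ (C : Type u) (_ : AddCommGroup C) (_ : Module (MonoidAlgebra ℤ G) C),
          Nonempty ((Q × M₀) ≃ₗ[MonoidAlgebra ℤ G] (M × C)) := by
  classical
  set R' := MonoidAlgebra ℤ G
  -- the filtered diagram of quotients by f.g. submodules
  haveI := h
  let F := quotDiagram M
  have hD : IsColimit ((uHom M).mapCocone (quotCocone M)) :=
    isColimitOfPreserves (uHom M) (quotIsColimit M)
  haveI := uHom_subsingleton_pt M
  -- the element given by the quotient map at ⊥
  let j₀ : FGSub M := ⟨⊥, Submodule.fg_bot⟩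
  let f₀ : M ⟶ F.obj j₀ := ModuleCat.ofHom (⊥ : Submodule R' M).mkQ
  let x₀ : (F ⋙ uHom M).obj j₀ := QuotientAddGroup.mk f₀
  have hx : ((uHom M).mapCocone (quotCocone M)).ι.app j₀ x₀ =
      ((uHom M).mapCocone (quotCocone M)).ι.app j₀ 0 := (uHom_subsingleton_pt M).allEq _ _
  obtain ⟨k, f, g, hfg⟩ :=
    Concrete.isColimit_exists_of_rep_eq.{u} (F ⋙ uHom M) hD x₀ 0 hx
  have hfg' : (uHomMap M (F.map f)) (QuotientAddGroup.mk f₀) = uHomMap M (F.map g) 0 := hfg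
  rw [map_zero] at hfg'
  -- unfold: the class of f₀ ≫ F.map f is zero, i.e. it factors through a projective
  have hmem : f₀ ≫ F.map f ∈ projFactor M (F.obj k) := by
    have h2 : (QuotientAddGroup.mk (f₀ ≫ F.map f) :
        (M ⟶ F.obj k) ⧸ projFactor M (F.obj k)) = 0 := hfg'
    exact (QuotientAddGroup.eq_zero_iff _).mp h2
  -- this composite is the quotient map by k
  have hcomp : f₀ ≫ F.map f = (ModuleCat.ofHom k.1.mkQ : M ⟶ F.obj k) := by
    ext x
    rfl
  rw [hcomp] at hmem
  obtain ⟨P, hP, gP, hQ, hfac⟩ := hmem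
  haveI := hP
  refine ⟨k.1, k.2, P, inferInstance, inferInstance, hP, ⟨gP.hom, hQ.hom, congr_arg ModuleCat.Hom.hom hfac⟩, ?_⟩
  -- Schanuel-style argument
  set M₀ := k.1
  let hQ' : (↥P) →ₗ[R'] ((↥M) ⧸ M₀) := hQ.hom
  have hfac' : hQ' ∘ₗ gP.hom = M₀.mkQ := congr_arg ModuleCat.Hom.hom hfac
  let φ : (P × M) →ₗ[R'] (M ⧸ M₀) :=
    hQ'.comp (LinearMap.fst R' P M) - M₀.mkQ.comp (LinearMap.snd R' P M)
  let Y := LinearMap.ker φ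
  let π₁ : Y →ₗ[R'] P := (LinearMap.fst R' P M).comp Y.subtype
  let π₂ : Y →ₗ[R'] M := (LinearMap.snd R' P M).comp Y.subtype
  -- section of π₂
  let s₂ : M →ₗ[R'] Y := LinearMap.codRestrict Y (LinearMap.prod gP.hom LinearMap.id)
    (fun m => by
      simp only [Y, LinearMap.mem_ker, φ, LinearMap.sub_apply, LinearMap.comp_apply,
        LinearMap.prod_apply, LinearMap.fst_apply, LinearMap.snd_apply, Function.prod,
        LinearMap.id_apply]
      rw [← LinearMap.comp_apply, hfac']
      simp)
  have h₂ : π₂ ∘ₗ s₂ = LinearMap.id := by ext m; rfl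
  -- π₁ is surjective
  have hπ₁ : Function.Surjective π₁ := by
    intro q
    obtain ⟨m, hm⟩ := M₀.mkQ_surjective (hQ' q)
    refine ⟨⟨(q, m), ?_⟩, rfl⟩
    simp only [Y, LinearMap.mem_ker, φ, LinearMap.sub_apply, LinearMap.comp_apply,
      LinearMap.fst_apply, LinearMap.snd_apply, hm, sub_self]
  obtain ⟨s₁, hs₁⟩ := Module.projective_lifting_property π₁ LinearMap.id hπ₁
  let e₁ : Y ≃ₗ[R'] M × LinearMap.ker π₂ := splitEquivAux π₂ s₂ h₂
  let e₂ : Y ≃ₗ[R'] P × LinearMap.ker π₁ := splitEquivAux π₁ s₁ hs₁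
  -- ker π₁ ≃ M₀
  let eK : LinearMap.ker π₁ ≃ₗ[R'] M₀ := {
    toFun := fun x => ⟨x.1.1.2, by
      have hY : φ x.1.1 = 0 := x.1.2
      have hq : x.1.1.1 = 0 := x.2
      simp only [φ, LinearMap.sub_apply, LinearMap.comp_apply, LinearMap.fst_apply,
        LinearMap.snd_apply, hq, map_zero, zero_sub, neg_eq_zero] at hY
      rwa [← Submodule.Quotient.mk_eq_zero, ← Submodule.mkQ_apply]⟩
    invFun := fun m => ⟨⟨(0, m.1), by
      simp only [Y, LinearMap.mem_ker, φ, LinearMap.sub_apply, LinearMap.comp_apply,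
        LinearMap.fst_apply, LinearMap.snd_apply, map_zero, zero_sub, neg_eq_zero,
        Submodule.mkQ_apply, Submodule.Quotient.mk_eq_zero]
      exact m.2⟩, by
        simp only [LinearMap.mem_ker, π₁, LinearMap.comp_apply, Submodule.subtype_apply,
          LinearMap.fst_apply]⟩
    map_add' := fun x y => rfl
    map_smul' := fun r x => rfl
    left_inv := fun x => by
      ext
      · exact x.2.symm
      · rfl
    right_inv := fun m => rfl }
  exact ⟨LinearMap.ker π₂, inferInstance, inferInstance,
    ⟨((LinearEquiv.refl R' P).prodCongr eK.symm).trans (e₂.symm.trans e₁)⟩⟩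
end
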